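/- Let R be a Noetherian commutative ring of prime characteristic p, let e ≥ 1, let φ : F^e_* R → R be a surjective R-linear map, and let J ⊆ R be a φ-compatible ideal. Then every minimal prime ideal over J is φ-compatible. -/

import Mathlib

/-- If `J` is compatible with a surjective `R`-linear map `φ : F^e_* R → R`,
then so is every minimal prime over `J`. -/
theorem stmt_3 {R : Type*} [CommRing R] [IsNoetherianRing R]
    (p : ℕ) (hp : p.Prime) [CharP R p]
    (e : ℕ) (he : 1 ≤ e)
    (φ : R → R)
    (hadd : ∀ x y : R, φ (x + y) = φ x + φ y)
    (hlin : ∀ r x : R, φ (r ^ p ^ e * x) = r * φ x)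
    (hsurj : Function.Surjective φ)
    (J : Ideal R) (hJ : ∀ x ∈ J, φ x ∈ J)
    (P : Ideal R) (hP : P ∈ J.minimalPrimes) :
    ∀ x ∈ P, φ x ∈ P := by
  have hPprime : P.IsPrime := hP.1.1
  obtain ⟨c, hc⟩ := hsurj 1
  -- Step 1: one Frobenius-power descent
  have step : ∀ x : R, x ^ p ^ e ∈ J → x ∈ J := by
    intro x hx
    have : φ (x ^ p ^ e * c) = x := by rw [hlin, hc, mul_one]
    rw [← this]
    exact hJ _ (J.mul_mem_right c hx)
  -- Step 2: iterated descent
  have stepk : ∀ k : ℕ, ∀ x : R, x ^ (p ^ e) ^ k ∈ J → x ∈ J := by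
    intro k
    induction k with
    | zero => intro x hx; simpa using hx
    | succ k ih =>
      intro x hx
      apply step
      apply ih
      rw [← pow_mul, ← pow_succ']
      exact hx
  -- Step 3: J is radical
  have hrad : J.radical = J := by
    refine le_antisymm ?_ Ideal.le_radical
    intro x hx
    obtain ⟨n, hn⟩ := hx
    apply stepk n
    have hpe : 2 ≤ p ^ e :=
      le_trans hp.two_le (Nat.le_self_pow (by omega) p)
    have hle : n ≤ (p ^ e) ^ n :=
      le_trans (Nat.le_of_lt Nat.lt_two_pow_self) (Nat.pow_le_pow_left hpe n)
    obtain ⟨m, hm⟩ := Nat.exists_eq_add_of_le hle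
    rw [hm, pow_add]
    exact J.mul_mem_right _ hn
  -- Step 4: finitely many minimal primes, prime avoidance
  have hfin : J.minimalPrimes.Finite := by
    rw [Ideal.minimalPrimes_eq_comap]
    exact (minimalPrimes.finite_of_isNoetherianRing (R ⧸ J)).image _
  set S : Set (Ideal R) := J.minimalPrimes \ {P} with hS
  have hSfin : S.Finite := hfin.subset Set.diff_subset
  have hnotle : ¬ sInf S ≤ P := by
    intro hle
    rw [← hSfin.coe_toFinset, ← Finset.inf_id_eq_sInf, hPprime.inf_le'] at hle
    obtain ⟨Q, hQ, hQP⟩ := hle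
    rw [Set.Finite.mem_toFinset] at hQ
    have : P ≤ Q := hP.2 ⟨hQ.1.1.1, hQ.1.1.2⟩ hQP
    exact hQ.2 (le_antisymm hQP this)
  obtain ⟨s, hsS, hsP⟩ := SetLike.not_le_iff_exists.mp hnotle
  -- s kills P into J
  have hkill : ∀ y ∈ P, s * y ∈ J := by
    intro y hy
    have hins : J.minimalPrimes = insert P S := by
      rw [hS, Set.insert_diff_singleton, Set.insert_eq_self.mpr hP]
    have : s * y ∈ sInf J.minimalPrimes := by
      rw [hins, sInf_insert]
      exact ⟨P.mul_mem_left s hy, (sInf S).mul_mem_right y hsS⟩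
    rwa [Ideal.sInf_minimalPrimes, hrad] at this
  -- Conclusion
  intro x hx
  have h1 : s ^ p ^ e * x ∈ J := by
    have hpe1 : 1 ≤ p ^ e := Nat.one_le_pow _ _ hp.pos
    have : s ^ p ^ e * x = s ^ (p ^ e - 1) * (s * x) := by
      rw [← mul_assoc, ← pow_succ, Nat.sub_add_cancel hpe1]
    rw [this]
    exact J.mul_mem_left _ (hkill x hx)
  have h2 : s * φ x ∈ P := by
    rw [← hlin]
    exact hP.1.2 (hJ _ h1)
  rcases hPprime.mem_or_mem h2 with h | h
  · exact absurd h hsP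
  · exact h
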